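/- Let G_n (n even, n ≥ 2) be the caterpillar with central path v_1,…,v_n and one leaf u_i at each v_i. Adding the n/2 edges u_2u_3, u_4u_5, …, u_{n−2}u_{n−1}, u_nu_1 yields a graph with the spanning cycle u_1 → v_1 → v_2 → u_2 → u_3 → v_3 → v_4 → u_4 → ⋯ → v_{n−1} → v_n → u_n → u_1; hence λ_H(G_n) ≤ n/2. -/

import Mathlib

/-- The caterpillar on `2n` vertices: central path `v_0, …, v_{n-1}` (the `Sum.inl` vertices)
with one leaf `u_i = Sum.inr i` attached to each `v_i` (0-indexed: `u_i` of the paper is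
`Sum.inr (i-1)`). -/
def caterpillar1 (n : ℕ) : SimpleGraph (Fin n ⊕ Fin n) :=
  SimpleGraph.fromRel (fun a b =>
    match a, b with
    | Sum.inl i, Sum.inl j => i.val + 1 = j.val
    | Sum.inl i, Sum.inr j => i = j
    | _, _ => False)

/-- The `n/2` added edges `u_2u_3, u_4u_5, …, u_{n-2}u_{n-1}, u_nu_1` (0-indexed:
`(1,2), (3,4), …, (n-3,n-2)` and `(n-1,0)` among the leaves). -/
def caterpillar1Extra (n : ℕ) : SimpleGraph (Fin n ⊕ Fin n) :=
  SimpleGraph.fromRel (fun a b =>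
    match a, b with
    | Sum.inr i, Sum.inr j =>
        (i.val % 2 = 1 ∧ i.val + 1 = j.val) ∨ (i.val = n - 1 ∧ j.val = 0)
    | _, _ => False)

open SimpleGraph

private lemma succ_adj (m k : ℕ) (h : k + 1 < m + 3) :
    (cycleGraph (m+3)).Adj ⟨k+1, h⟩ ⟨k, by omega⟩ := by
  rw [cycleGraph_adj]
  left
  rw [sub_eq_iff_eq_add]
  apply Fin.ext
  show k + 1 = ((1 : Fin (m+3)).val + k) % (m+3)
  have h1 : (1:ℕ) % (m+3) = 1 := Nat.mod_eq_of_lt (by omega)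
  rw [Fin.val_one', h1, Nat.mod_eq_of_lt (by omega)]
  omega

private def walkDown (m : ℕ) : (k : ℕ) → (h : k < m + 3) → (cycleGraph (m+3)).Walk ⟨k, h⟩ ⟨0, by omega⟩
  | 0, _ => Walk.nil
  | k+1, h => Walk.cons (succ_adj m k h) (walkDown m k (by omega))

private lemma walkDown_support (m k : ℕ) (h : k < m + 3) (x : Fin (m+3)) :
    x ∈ (walkDown m k h).support ↔ x.val ≤ k := by
  induction k with
  | zero =>
      rw [walkDown, Walk.support_nil, List.mem_singleton, Fin.ext_iff]
      show x.val = 0 ↔ x.val ≤ 0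
      omega
  | succ k ih =>
      rw [walkDown]
      simp only [Walk.support_cons, List.mem_cons, ih (by omega)]
      constructor
      · rintro (rfl | hx)
        · exact Nat.le_refl _
        · omega
      · intro hx
        rcases Nat.lt_or_ge x.val (k+1) with h' | h'
        · right; omega
        · left
          apply Fin.ext
          show x.val = k + 1
          omega

private lemma walkDown_isPath (m k : ℕ) (h : k < m + 3) : (walkDown m k h).IsPath := by
  induction k with
  | zero => simp [walkDown]
  | succ k ih =>
      rw [walkDown, Walk.cons_isPath_iff]
      refine ⟨ih (by omega), ?_⟩
      rw [walkDown_support]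
      show ¬ (k + 1 ≤ k)
      omega

private lemma walkDown_edges (m k : ℕ) (h : k < m + 3) (x : Fin (m+3)) :
    s(x, (⟨0, by omega⟩ : Fin (m+3))) ∈ (walkDown m k h).edges → x.val = 1 := by
  induction k with
  | zero => simp [walkDown]
  | succ k ih =>
      rw [walkDown]
      simp only [Walk.edges_cons, List.mem_cons]
      rintro (he | he)
      · rw [Sym2.eq_iff] at he
        rcases he with ⟨h1, h2⟩ | ⟨h1, h2⟩
        · have h2' : (0:ℕ) = k := congrArg Fin.val h2
          have h1' : x.val = k+1 := congrArg Fin.val h1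
          omega
        · have h2' : (0:ℕ) = k+1 := congrArg Fin.val h2
          omega
      · exact ih (by omega) he

private lemma cycleGraph_isHamiltonian : ∀ k, 3 ≤ k → (cycleGraph k).IsHamiltonian := by
  intro k hk
  obtain ⟨m, rfl⟩ : ∃ m, k = m + 3 := ⟨k - 3, by omega⟩
  intro _
  have hadj : (cycleGraph (m+3)).Adj ⟨m+2, by omega⟩ ⟨0, by omega⟩ := by
    rw [cycleGraph_adj]
    right
    rw [sub_eq_iff_eq_add]
    apply Fin.ext
    show (0:ℕ) = ((1 : Fin (m+3)).val + (m+2)) % (m+3)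
    have h1 : (1:ℕ) % (m+3) = 1 := Nat.mod_eq_of_lt (by omega)
    rw [Fin.val_one', h1, show 1 + (m+2) = m+3 by omega, Nat.mod_self]
  refine ⟨⟨m+2, by omega⟩, Walk.cons hadj (walkDown m (m+2) (by omega)).reverse, ?_⟩
  rw [Walk.isHamiltonianCycle_iff_isCycle_and_support_count_tail_eq_one]
  refine ⟨?_, ?_⟩
  · rw [Walk.cons_isCycle_iff]
    refine ⟨(walkDown_isPath m (m+2) (by omega)).reverse, ?_⟩
    rw [Walk.edges_reverse, List.mem_reverse]
    intro hmem
    have := walkDown_edges m (m+2) (by omega) ⟨m+2, by omega⟩ hmem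
    simp at this
  · intro a
    rw [Walk.support_cons]
    simp only [List.tail_cons]
    refine List.count_eq_one_of_mem
      (walkDown_isPath m (m+2) (by omega)).reverse.support_nodup ?_
    rw [Walk.support_reverse, List.mem_reverse, walkDown_support]
    omega

private lemma isHamiltonian_of_hom {α β : Type*} [DecidableEq α] [DecidableEq β]
    [Fintype α] [Fintype β]
    {G : SimpleGraph α} {H : SimpleGraph β} (f : G →g H) (hf : Function.Bijective f)
    (hG : G.IsHamiltonian) : H.IsHamiltonian := by
  intro hcard
  obtain ⟨a, p, hp⟩ := hG (by rwa [Fintype.card_of_bijective hf])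
  exact ⟨f a, p.map f, hp.map hf⟩

private def ham (n : ℕ) (i : Fin (2*n)) : Fin n ⊕ Fin n :=
  if i.val % 4 = 0 ∨ i.val % 4 = 3
  then Sum.inr ⟨i.val / 2, by have := i.isLt; omega⟩
  else Sum.inl ⟨i.val / 2, by have := i.isLt; omega⟩

private lemma ham_inr (n : ℕ) (i : Fin (2*n)) (h : i.val % 4 = 0 ∨ i.val % 4 = 3) :
    ham n i = Sum.inr ⟨i.val / 2, by have := i.isLt; omega⟩ := by
  rw [ham]; exact if_pos h

private lemma ham_inl (n : ℕ) (i : Fin (2*n)) (h : ¬(i.val % 4 = 0 ∨ i.val % 4 = 3)) :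
    ham n i = Sum.inl ⟨i.val / 2, by have := i.isLt; omega⟩ := by
  rw [ham]; exact if_neg h

private lemma ham_inj (n : ℕ) : Function.Injective (ham n) := by
  intro i j hij
  unfold ham at hij
  split_ifs at hij with h1 h2 <;>
    simp only [Sum.inr.injEq, Sum.inl.injEq, Fin.mk.injEq, reduceCtorEq] at hij <;>
    (apply Fin.ext; omega)

private lemma ham_step (n : ℕ) [NeZero (2*n)] (hn : 2 ≤ n) (heven : Even n) (i : Fin (2*n)) :
    (caterpillar1 n ⊔ caterpillar1Extra n).Adj (ham n i) (ham n (i+1)) := by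
  obtain ⟨r, hr⟩ := heven
  have hlt := i.isLt
  have hone : (1 : Fin (2*n)).val = 1 := by
    rw [Fin.val_one']; exact Nat.mod_eq_of_lt (by omega)
  have hval : (i+1).val = (i.val + 1) % (2*n) := by
    rw [Fin.add_def, hone]
  rcases Nat.lt_or_ge (i.val + 1) (2*n) with hsmall | hbig
  · have hval' : (i+1).val = i.val + 1 := by rw [hval]; exact Nat.mod_eq_of_lt hsmall
    have h4 : i.val % 4 = 0 ∨ i.val % 4 = 1 ∨ i.val % 4 = 2 ∨ i.val % 4 = 3 := by omega
    rcases h4 with h4 | h4 | h4 | h4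
    · rw [ham_inr n i (Or.inl h4), ham_inl n (i+1) (by omega)]
      rw [SimpleGraph.sup_adj]; left
      rw [caterpillar1, SimpleGraph.fromRel_adj]
      refine ⟨by simp, Or.inr ?_⟩
      have : (i+1).val / 2 = i.val / 2 := by omega
      exact Fin.ext this
    · rw [ham_inl n i (by omega), ham_inl n (i+1) (by omega)]
      rw [SimpleGraph.sup_adj]; left
      rw [caterpillar1, SimpleGraph.fromRel_adj]
      refine ⟨?_, Or.inl ?_⟩
      · simp only [ne_eq, Sum.inl.injEq, Fin.mk.injEq]; omega
      · show i.val / 2 + 1 = (i+1).val / 2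
        omega
    · rw [ham_inl n i (by omega), ham_inr n (i+1) (by omega)]
      rw [SimpleGraph.sup_adj]; left
      rw [caterpillar1, SimpleGraph.fromRel_adj]
      refine ⟨by simp, Or.inl ?_⟩
      have : i.val / 2 = (i+1).val / 2 := by omega
      exact Fin.ext this
    · rw [ham_inr n i (Or.inr h4), ham_inr n (i+1) (by omega)]
      rw [SimpleGraph.sup_adj]; right
      rw [caterpillar1Extra, SimpleGraph.fromRel_adj]
      refine ⟨?_, Or.inl (Or.inl ⟨?_, ?_⟩)⟩
      · simp only [ne_eq, Sum.inr.injEq, Fin.mk.injEq]; omega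
      · show i.val / 2 % 2 = 1
        omega
      · show i.val / 2 + 1 = (i+1).val / 2
        omega
  · have heq : i.val + 1 = 2*n := by omega
    have hval' : (i+1).val = 0 := by rw [hval, heq, Nat.mod_self]
    have h4 : i.val % 4 = 3 := by omega
    rw [ham_inr n i (Or.inr h4), ham_inr n (i+1) (by omega)]
    rw [SimpleGraph.sup_adj]; right
    rw [caterpillar1Extra, SimpleGraph.fromRel_adj]
    refine ⟨?_, Or.inl (Or.inr ⟨?_, ?_⟩)⟩
    · simp only [ne_eq, Sum.inr.injEq, Fin.mk.injEq]; omega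
    · show i.val / 2 = n - 1
      omega
    · show (i+1).val / 2 = 0
      omega

private theorem caterpillar1_ham (n : ℕ) (hn : 2 ≤ n) (heven : Even n) :
    (caterpillar1 n ⊔ caterpillar1Extra n).IsHamiltonian := by
  classical
  haveI : NeZero (2*n) := ⟨by omega⟩
  have hbij : Function.Bijective (ham n) := by
    rw [Fintype.bijective_iff_injective_and_card]
    refine ⟨ham_inj n, ?_⟩
    simp [Fintype.card_sum]
    omega
  refine isHamiltonian_of_hom ⟨ham n, ?_⟩ hbij (cycleGraph_isHamiltonian (2*n) (by omega))
  intro u v huv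
  rw [cycleGraph_adj'] at huv
  rcases huv with h | h
  · have h' : u - v = 1 := by
      apply Fin.ext
      rw [Fin.val_one']
      rw [Nat.mod_eq_of_lt (by omega)]
      exact h
    have : u = v + 1 := by
      rw [sub_eq_iff_eq_add] at h'
      rw [h', add_comm]
    subst this
    exact (ham_step n hn heven v).symm
  · have h' : v - u = 1 := by
      apply Fin.ext
      rw [Fin.val_one']
      rw [Nat.mod_eq_of_lt (by omega)]
      exact h
    have : v = u + 1 := by
      rw [sub_eq_iff_eq_add] at h'
      rw [h', add_comm]
    subst this
    exact ham_step n hn heven u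

/-- for even `n ≥ 2`, adding these `n/2` edges to the caterpillar yields a
Hamiltonian graph (with spanning cycle
`u_1 → v_1 → v_2 → u_2 → u_3 → v_3 → ⋯ → v_n → u_n → u_1`); hence `λ_H(G_n) ≤ n/2`. -/
theorem caterpillar1_with_extra_isHamiltonian (n : ℕ) (hn : 2 ≤ n) (heven : Even n) :
    (caterpillar1 n ⊔ caterpillar1Extra n).IsHamiltonian ∧
    ((caterpillar1 n ⊔ caterpillar1Extra n).edgeSet \
        (caterpillar1 n).edgeSet).ncard ≤ n / 2 := by
  refine ⟨caterpillar1_ham n hn heven, ?_⟩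
  obtain ⟨r, hr⟩ := heven
  have hn0 : 0 < n := by omega
  set g : Fin (n/2) → Sym2 (Fin n ⊕ Fin n) := fun k =>
    s(Sum.inr ⟨(2*k.val+1) % n, Nat.mod_lt _ hn0⟩,
      Sum.inr ⟨(2*k.val+2) % n, Nat.mod_lt _ hn0⟩) with hg
  have hsub : ((caterpillar1 n ⊔ caterpillar1Extra n).edgeSet \ (caterpillar1 n).edgeSet)
      ⊆ Set.range g := by
    rintro e ⟨he1, he2⟩
    rw [SimpleGraph.edgeSet_sup] at he1
    have he : e ∈ (caterpillar1Extra n).edgeSet := he1.resolve_left he2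
    induction e using Sym2.ind with
    | _ a b =>
      rw [SimpleGraph.mem_edgeSet, caterpillar1Extra, SimpleGraph.fromRel_adj] at he
      obtain ⟨hne, hrel⟩ := he
      rcases a with x | x <;> rcases b with y | y
      · exact (hrel.elim id id).elim
      · exact (hrel.elim id id).elim
      · exact (hrel.elim id id).elim
      · have hx := x.isLt
        have hy := y.isLt
        rcases hrel with (⟨h1,h2⟩|⟨h1,h2⟩) | (⟨h1,h2⟩|⟨h1,h2⟩)
        · refine ⟨⟨x.val/2, by omega⟩, ?_⟩
          rw [hg, Sym2.eq_iff]
          have e1 : (2*(x.val/2)+1) % n = x.val := by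
            rw [Nat.mod_eq_of_lt (by omega)]; omega
          have e2 : (2*(x.val/2)+2) % n = y.val := by
            rw [Nat.mod_eq_of_lt (by omega)]; omega
          exact Or.inl ⟨congrArg Sum.inr (Fin.ext e1), congrArg Sum.inr (Fin.ext e2)⟩
        · refine ⟨⟨n/2 - 1, by omega⟩, ?_⟩
          rw [hg, Sym2.eq_iff]
          have e1 : (2*(n/2-1)+1) % n = x.val := by
            rw [Nat.mod_eq_of_lt (by omega)]; omega
          have e2 : (2*(n/2-1)+2) % n = y.val := by
            rw [show 2*(n/2-1)+2 = n by omega, Nat.mod_self]; omega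
          exact Or.inl ⟨congrArg Sum.inr (Fin.ext e1), congrArg Sum.inr (Fin.ext e2)⟩
        · refine ⟨⟨y.val/2, by omega⟩, ?_⟩
          rw [hg, Sym2.eq_iff]
          have e1 : (2*(y.val/2)+1) % n = y.val := by
            rw [Nat.mod_eq_of_lt (by omega)]; omega
          have e2 : (2*(y.val/2)+2) % n = x.val := by
            rw [Nat.mod_eq_of_lt (by omega)]; omega
          exact Or.inr ⟨congrArg Sum.inr (Fin.ext e1), congrArg Sum.inr (Fin.ext e2)⟩
        · refine ⟨⟨n/2 - 1, by omega⟩, ?_⟩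
          rw [hg, Sym2.eq_iff]
          have e1 : (2*(n/2-1)+1) % n = y.val := by
            rw [Nat.mod_eq_of_lt (by omega)]; omega
          have e2 : (2*(n/2-1)+2) % n = x.val := by
            rw [show 2*(n/2-1)+2 = n by omega, Nat.mod_self]; omega
          exact Or.inr ⟨congrArg Sum.inr (Fin.ext e1), congrArg Sum.inr (Fin.ext e2)⟩
  refine le_trans (Set.ncard_le_ncard hsub (Set.finite_range g)) ?_
  rw [← Set.image_univ]
  refine le_trans (Set.ncard_image_le Set.finite_univ) ?_
  rw [Set.ncard_univ]
  simp [Nat.card_eq_fintype_card]
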